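/- For a positive integer j, the inequality j/√3 < (j+1)/2 holds if and only if j ≤ 6. Consequently the set A_c := (0, 1/2] ∪ ⋃_{k=1}^{6} [k/√3, (k+1)/2] is a union of nondegenerate intervals, and for A > 0, the open interval (√3·A, 2A) contains no positive integer if and only if A ∈ A_c. -/
import Mathlib


open Set

noncomputable def Ac : Set ℝ :=
  Ioc 0 (1 / 2) ∪ ⋃ k ∈ Finset.Icc (1 : ℕ) 6, Icc ((k : ℝ) / Real.sqrt 3) (((k : ℝ) + 1) / 2)

/-- `j/√3 < (j+1)/2` iff `j ≤ 6` (so the intervals of `A_c` are nondegenerate), and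
for `A > 0` the interval `(√3 A, 2A)` contains no positive integer iff `A ∈ A_c`. -/
theorem stmt10 :
    (∀ j : ℕ, 1 ≤ j → ((j : ℝ) / Real.sqrt 3 < ((j : ℝ) + 1) / 2 ↔ j ≤ 6)) ∧
    (∀ k ∈ Finset.Icc (1 : ℕ) 6, (k : ℝ) / Real.sqrt 3 < ((k : ℝ) + 1) / 2) ∧
    (∀ A : ℝ, 0 < A →
      ((¬ ∃ j : ℕ, 1 ≤ j ∧ Real.sqrt 3 * A < (j : ℝ) ∧ (j : ℝ) < 2 * A) ↔ A ∈ Ac)) := by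
  have hs : Real.sqrt 3 ^ 2 = 3 := Real.sq_sqrt (by norm_num)
  have hs0 : (0 : ℝ) < Real.sqrt 3 := Real.sqrt_pos.mpr (by norm_num)
  have hs3 : (12 : ℝ) / 7 < Real.sqrt 3 := by nlinarith
  have hs2 : Real.sqrt 3 < 2 := by nlinarith
  have key : ∀ j : ℕ, 1 ≤ j → ((j : ℝ) / Real.sqrt 3 < ((j : ℝ) + 1) / 2 ↔ j ≤ 6) := by
    intro j hj
    rw [div_lt_div_iff₀ hs0 (by norm_num : (0:ℝ) < 2)]
    constructor
    · intro h
      by_contra hle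
      push_neg at hle
      have h7 : (7 : ℝ) ≤ j := by exact_mod_cast hle
      nlinarith [h, hs, h7, mul_pos hs0 hs0]
    · intro h
      have h6 : (j : ℝ) ≤ 6 := by exact_mod_cast h
      have h1 : (1 : ℝ) ≤ j := by exact_mod_cast hj
      nlinarith [hs3, h6, h1]
  refine ⟨key, ?_, ?_⟩
  · intro k hk
    simp only [Finset.mem_Icc] at hk
    exact (key k hk.1).mpr hk.2
  · intro A hA
    constructor
    · intro h
      rcases le_or_gt A (1 / 2) with hA2 | hA2
      · exact Or.inl ⟨hA, hA2⟩
      · -- A > 1/2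
        set m := ⌈2 * A⌉₊ with hm
        have h2A : (1 : ℝ) < 2 * A := by linarith
        have hm2 : 2 ≤ m := by
          rw [hm]
          exact_mod_cast Nat.lt_ceil.mpr (by exact_mod_cast h2A)
        set k := m - 1 with hk
        have hk1 : 1 ≤ k := by omega
        have hkm : (k : ℝ) = (m : ℝ) - 1 := by
          have : (k : ℕ) + 1 = m := by omega
          have := congrArg (Nat.cast : ℕ → ℝ) this
          push_cast at this
          linarith
        have hub : 2 * A ≤ (k : ℝ) + 1 := by
          rw [hkm]
          have := Nat.le_ceil (2 * A)
          simpa [hm] using by linarith [Nat.le_ceil (2 * A)]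
        have hklt : (k : ℝ) < 2 * A := by
          rw [hkm]
          have := Nat.ceil_lt_add_one (by positivity : (0:ℝ) ≤ 2 * A)
          linarith
        have hlb : (k : ℝ) ≤ Real.sqrt 3 * A := by
          by_contra hc
          push_neg at hc
          exact h ⟨k, hk1, hc, hklt⟩
        have hk6 : k ≤ 6 := by
          by_contra hle
          push_neg at hle
          have h7 : (7 : ℝ) ≤ k := by exact_mod_cast hle
          -- k ≤ √3 A ≤ √3 (k+1)/2
          nlinarith [hlb, hub, hs, hs0, h7, mul_le_mul_of_nonneg_left hub hs0.le]
        refine Or.inr ?_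
        simp only [mem_iUnion, Finset.mem_Icc]
        refine ⟨k, ⟨hk1, hk6⟩, ?_, ?_⟩
        · rw [div_le_iff₀ hs0]
          nlinarith [hlb]
        · linarith
    · rintro (⟨hA0, hA2⟩ | hmem) ⟨j, hj1, hj2, hj3⟩
      · have : (1 : ℝ) ≤ j := by exact_mod_cast hj1
        linarith
      · simp only [mem_iUnion, Finset.mem_Icc] at hmem
        obtain ⟨k, ⟨hk1, hk6⟩, hlo, hhi⟩ := hmem
        have hklo : (k : ℝ) ≤ Real.sqrt 3 * A := by
          rw [div_le_iff₀ hs0] at hlo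
          nlinarith [hlo]
        have hkj : (k : ℝ) < j := lt_of_le_of_lt hklo hj2
        have hkj' : k + 1 ≤ j := by exact_mod_cast Nat.lt_iff_add_one_le.mp (by exact_mod_cast hkj)
        have : ((k : ℝ) + 1) ≤ j := by exact_mod_cast hkj'
        linarith
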